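/- Let ψ: ℝⁿ → ℝ ∪ {+∞} be convex, F₁, F₂: ℝ → (0,∞) measurable, and h ∈ Φ ∪ Ψ. Then for every linear map T on ℝⁿ with |det T| = 1, one has as^{orlicz}_{h,F₁,F₂}(ψ∘T) = as^{orlicz}_{h,F₁,F₂}(ψ) and G^{orlicz}_{h,F₁,F₂}(ψ∘T) = G^{orlicz}_{h,F₁,F₂}(ψ). -/

import Mathlib

open MeasureTheory Real Set
open scoped RealInnerProductSpace

noncomputable section

/-- `ℝⁿ`: `n`-dimensional Euclidean space. -/
abbrev En (n : ℕ) := EuclideanSpace ℝ (Fin n)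

variable {n : ℕ}

/-- The Legendre transform `ψ*(y) = sup_x (⟨x,y⟩ - ψ(x))`. -/
def legendreT (ψ : En n → ℝ) (y : En n) : ℝ :=
  sSup {r : ℝ | ∃ x : En n, r = ⟪x, y⟫ - ψ x}

/-- The determinant of the Hessian `∇²ψ(x)` (the Hessian being the derivative of the
gradient). -/
def hessDet (ψ : En n → ℝ) (x : En n) : ℝ :=
  LinearMap.det ((fderiv ℝ (gradient ψ) x).toLinearMap)

/-- `X_ψ`: the set of points where the Hessian of `ψ` exists and is invertible. -/
def Xset (ψ : En n → ℝ) : Set (En n) :=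
  {x | DifferentiableAt ℝ ψ x ∧ DifferentiableAt ℝ (gradient ψ) x ∧ hessDet ψ x ≠ 0}

/-- `I(g, φ) = ∫_{X_φ} g`. -/
def Ifun (φ g : En n → ℝ) : ℝ := ∫ y in Xset φ, g y

/-- Membership in `F⁺_φ`: positive on `X_φ` and integrable there with positive integral. -/
def FplusOn (φ g : En n → ℝ) : Prop :=
  (∀ y ∈ Xset φ, 0 < g y) ∧ IntegrableOn g (Xset φ) ∧ 0 < Ifun φ g

/-- Log-concavity of `g` on a set `S`. -/
def IsLogConcaveOn (S : Set (En n)) (g : En n → ℝ) : Prop :=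
  (∀ x ∈ S, 0 ≤ g x) ∧
    ∀ x ∈ S, ∀ y ∈ S, ∀ a b : ℝ, 0 ≤ a → 0 ≤ b → a + b = 1 →
      a • x + b • y ∈ S → g x ^ a * g y ^ b ≤ g (a • x + b • y)

/-- The general `L_p` affine surface area `as_{p,F₁,F₂}(ψ)`. -/
def aspGen (p : ℝ) (F₁ F₂ : ℝ → ℝ) (ψ : En n → ℝ) : ℝ :=
  ∫ x in Xset ψ, (F₁ (ψ x)) ^ ((n : ℝ) / ((n : ℝ) + p)) *
    (F₂ (⟪x, gradient ψ x⟫ - ψ x) * hessDet ψ x) ^ (p / ((n : ℝ) + p))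

/-- `V_{p,F₁,F₂}(ψ, g)`. -/
def Vp (p : ℝ) (F₁ F₂ : ℝ → ℝ) (ψ g : En n → ℝ) : ℝ :=
  ∫ x in Xset ψ,
    (F₂ (⟪x, gradient ψ x⟫ - ψ x) / g (gradient ψ x)) ^ (p / (n : ℝ)) * F₁ (ψ x)

/-- The Orlicz mixed integral `V_{h,F₁,F₂}(ψ, g)`. -/
def Vh (h F₁ F₂ : ℝ → ℝ) (ψ g : En n → ℝ) : ℝ :=
  ∫ x in Xset ψ, h (g (gradient ψ x) / F₂ (⟪x, gradient ψ x⟫ - ψ x)) * F₁ (ψ x)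

/-- The class `Φ`: positive continuous functions on `(0,∞)` that are constant or
strictly convex. -/
def PhiClass (h : ℝ → ℝ) : Prop :=
  ContinuousOn h (Ioi 0) ∧ (∀ t ∈ Ioi (0 : ℝ), 0 < h t) ∧
    ((∃ c, ∀ t ∈ Ioi (0 : ℝ), h t = c) ∨ StrictConvexOn ℝ (Ioi 0) h)

/-- The class `Ψ`: positive continuous functions on `(0,∞)` that are constant or
increasing and strictly concave. -/
def PsiClass (h : ℝ → ℝ) : Prop :=
  ContinuousOn h (Ioi 0) ∧ (∀ t ∈ Ioi (0 : ℝ), 0 < h t) ∧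
    ((∃ c, ∀ t ∈ Ioi (0 : ℝ), h t = c) ∨
      (StrictMonoOn h (Ioi 0) ∧ StrictConcaveOn ℝ (Ioi 0) h))

/-- `(√(2π))ⁿ`. -/
def sqrtTwoPiPow (n : ℕ) : ℝ := (Real.sqrt (2 * π)) ^ n

/-- The general Orlicz affine surface area (infimum version; used when `h ∈ Φ`). -/
def asOrliczInf (h F₁ F₂ : ℝ → ℝ) (ψ : En n → ℝ) : ℝ :=
  sInf {r | ∃ g : En n → ℝ, FplusOn (legendreT ψ) g ∧
    Ifun (legendreT ψ) g = sqrtTwoPiPow n ∧ r = Vh h F₁ F₂ ψ g}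

/-- The general Orlicz affine surface area (supremum version; used when `h ∈ Ψ`). -/
def asOrliczSup (h F₁ F₂ : ℝ → ℝ) (ψ : En n → ℝ) : ℝ :=
  sSup {r | ∃ g : En n → ℝ, FplusOn (legendreT ψ) g ∧
    Ifun (legendreT ψ) g = sqrtTwoPiPow n ∧ r = Vh h F₁ F₂ ψ g}

/-- The general Orlicz geominimal surface area (infimum version; used when `h ∈ Φ`). -/
def GOrliczInf (h F₁ F₂ : ℝ → ℝ) (ψ : En n → ℝ) : ℝ :=
  sInf {r | ∃ g : En n → ℝ, FplusOn (legendreT ψ) g ∧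
    IsLogConcaveOn (Xset (legendreT ψ)) g ∧
    Ifun (legendreT ψ) g = sqrtTwoPiPow n ∧ r = Vh h F₁ F₂ ψ g}

/-- The general Orlicz geominimal surface area (supremum version; used when `h ∈ Ψ`). -/
def GOrliczSup (h F₁ F₂ : ℝ → ℝ) (ψ : En n → ℝ) : ℝ :=
  sSup {r | ∃ g : En n → ℝ, FplusOn (legendreT ψ) g ∧
    IsLogConcaveOn (Xset (legendreT ψ)) g ∧
    Ifun (legendreT ψ) g = sqrtTwoPiPow n ∧ r = Vh h F₁ F₂ ψ g}

/-- The general `L_p` geominimal surface area (infimum version; used when `p ≥ 0`). -/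
def GpInf (p : ℝ) (F₁ F₂ : ℝ → ℝ) (ψ : En n → ℝ) : ℝ :=
  sInf {r | ∃ g : En n → ℝ, FplusOn (legendreT ψ) g ∧
    IsLogConcaveOn (Xset (legendreT ψ)) g ∧
    r = (Vp p F₁ F₂ ψ g) ^ ((n : ℝ) / ((n : ℝ) + p)) *
        (Ifun (legendreT ψ) g) ^ (p / ((n : ℝ) + p))}

/-- The general `L_p` geominimal surface area (supremum version; used when `-n ≠ p < 0`). -/
def GpSup (p : ℝ) (F₁ F₂ : ℝ → ℝ) (ψ : En n → ℝ) : ℝ :=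
  sSup {r | ∃ g : En n → ℝ, FplusOn (legendreT ψ) g ∧
    IsLogConcaveOn (Xset (legendreT ψ)) g ∧
    r = (Vp p F₁ F₂ ψ g) ^ ((n : ℝ) / ((n : ℝ) + p)) *
        (Ifun (legendreT ψ) g) ^ (p / ((n : ℝ) + p))}

/-- `F̆(t) = sup{√(F₁(t₁)F₂(t₂)) : (t₁+t₂)/2 ≥ t}`. -/
def Fbreve (F₁ F₂ : ℝ → ℝ) (t : ℝ) : ℝ :=
  sSup {r | ∃ t₁ t₂ : ℝ, t ≤ (t₁ + t₂) / 2 ∧ r = Real.sqrt (F₁ t₁ * F₂ t₂)}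

/-- `I(F, c) = ∫_{ℝⁿ} F(c²‖x‖²/2) dx`. -/
def IF (n : ℕ) (F : ℝ → ℝ) (c : ℝ) : ℝ := ∫ x : En n, F (c ^ 2 * ‖x‖ ^ 2 / 2)

def adjE (B : En n ≃L[ℝ] En n) : En n ≃L[ℝ] En n :=
  ContinuousLinearEquiv.equivOfInverse
    (ContinuousLinearMap.adjoint (B : En n →L[ℝ] En n))
    (ContinuousLinearMap.adjoint ((B.symm : En n →L[ℝ] En n)))
    (fun x => by
      rw [← ContinuousLinearMap.comp_apply, ← ContinuousLinearMap.adjoint_comp]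
      have : (B : En n →L[ℝ] En n).comp (B.symm : En n →L[ℝ] En n)
          = ContinuousLinearMap.id ℝ (En n) := by ext v; simp
      rw [this, ContinuousLinearMap.adjoint_id, ContinuousLinearMap.id_apply])
    (fun x => by
      rw [← ContinuousLinearMap.comp_apply, ← ContinuousLinearMap.adjoint_comp]
      have : (B.symm : En n →L[ℝ] En n).comp (B : En n →L[ℝ] En n)
          = ContinuousLinearMap.id ℝ (En n) := by ext v; simp
      rw [this, ContinuousLinearMap.adjoint_id, ContinuousLinearMap.id_apply])

lemma adjE_apply (B : En n ≃L[ℝ] En n) (x : En n) :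
    adjE B x = ContinuousLinearMap.adjoint (B : En n →L[ℝ] En n) x := rfl

lemma adjE_coe (B : En n ≃L[ℝ] En n) :
    ((adjE B : En n ≃L[ℝ] En n) : En n →L[ℝ] En n)
      = ContinuousLinearMap.adjoint (B : En n →L[ℝ] En n) := rfl

lemma det_clm_adjoint (A : En n →L[ℝ] En n) :
    LinearMap.det ((ContinuousLinearMap.adjoint A) : En n →ₗ[ℝ] En n)
      = LinearMap.det (A : En n →ₗ[ℝ] En n) := by
  have h : ((ContinuousLinearMap.adjoint A) : En n →ₗ[ℝ] En n)
      = LinearMap.adjoint (A : En n →ₗ[ℝ] En n) := by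
    rw [LinearMap.eq_adjoint_iff]
    intro x y
    exact ContinuousLinearMap.adjoint_inner_left A y x
  let b := EuclideanSpace.basisFun (Fin n) ℝ
  rw [h, ← LinearMap.det_toMatrix b.toBasis, LinearMap.toMatrix_adjoint b b,
    Matrix.det_conjTranspose, star_trivial, LinearMap.det_toMatrix]

lemma det_equiv_mul (B : En n ≃L[ℝ] En n) :
    LinearMap.det ((B : En n →L[ℝ] En n) : En n →ₗ[ℝ] En n) *
      LinearMap.det ((B.symm : En n →L[ℝ] En n) : En n →ₗ[ℝ] En n) = 1 := by
  rw [← LinearMap.det_comp]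
  have : ((B : En n →L[ℝ] En n) : En n →ₗ[ℝ] En n).comp
      ((B.symm : En n →L[ℝ] En n) : En n →ₗ[ℝ] En n) = LinearMap.id := by
    ext v; simp
  rw [this, LinearMap.det_id]

lemma det_equiv_ne_zero (B : En n ≃L[ℝ] En n) :
    LinearMap.det ((B : En n →L[ℝ] En n) : En n →ₗ[ℝ] En n) ≠ 0 :=
  left_ne_zero_of_mul_eq_one (det_equiv_mul B)

lemma abs_det_symm (B : En n ≃L[ℝ] En n)
    (hB : |LinearMap.det ((B : En n →L[ℝ] En n) : En n →ₗ[ℝ] En n)| = 1) :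
    |LinearMap.det ((B.symm : En n →L[ℝ] En n) : En n →ₗ[ℝ] En n)| = 1 := by
  have := det_equiv_mul B
  have h2 : |LinearMap.det ((B : En n →L[ℝ] En n) : En n →ₗ[ℝ] En n)| *
      |LinearMap.det ((B.symm : En n →L[ℝ] En n) : En n →ₗ[ℝ] En n)| = 1 := by
    rw [← abs_mul, this, abs_one]
  rwa [hB, one_mul] at h2

lemma abs_det_adjE_symm (T : En n ≃L[ℝ] En n)
    (hT : |LinearMap.det ((T : En n →L[ℝ] En n) : En n →ₗ[ℝ] En n)| = 1) :
    |LinearMap.det (((adjE T.symm : En n ≃L[ℝ] En n) : En n →L[ℝ] En n) : En n →ₗ[ℝ] En n)| = 1 := by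
  rw [adjE_coe, det_clm_adjoint]
  exact abs_det_symm T hT

lemma gradient_comp (f : En n → ℝ) (B : En n ≃L[ℝ] En n) (x : En n) :
    gradient (fun y => f (B y)) x
      = ContinuousLinearMap.adjoint (B : En n →L[ℝ] En n) (gradient f (B x)) := by
  have hf : (fun y => f (B y)) = f ∘ ⇑B := rfl
  rw [gradient, hf, B.comp_right_fderiv]
  apply ext_inner_right ℝ
  intro w
  rw [ContinuousLinearMap.adjoint_inner_left, gradient]
  rw [InnerProductSpace.toDual_symm_apply, InnerProductSpace.toDual_symm_apply]
  rfl

lemma Xset_comp (f : En n → ℝ) (B : En n ≃L[ℝ] En n) :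
    Xset (fun x => f (B x)) = ⇑B ⁻¹' Xset f := by
  have hg : gradient (fun x => f (B x)) = fun x => adjE B (gradient f (B x)) :=
    funext fun x => gradient_comp f B x
  ext x
  simp only [Xset, Set.mem_setOf_eq, Set.mem_preimage]
  have h1 : DifferentiableAt ℝ (fun y => f (B y)) x ↔ DifferentiableAt ℝ f (B x) :=
    B.comp_right_differentiableAt_iff
  have h2 : DifferentiableAt ℝ (gradient (fun y => f (B y))) x
      ↔ DifferentiableAt ℝ (gradient f) (B x) := by
    rw [hg]
    have : (fun y => adjE B (gradient f (B y))) = ⇑(adjE B) ∘ (gradient f ∘ ⇑B) := rfl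
    rw [this]
    rw [(adjE B).comp_differentiableAt_iff]
    exact B.comp_right_differentiableAt_iff
  have h3 : hessDet (fun y => f (B y)) x = 0 ↔ hessDet f (B x) = 0 := by
    have hc : hessDet (fun y => f (B y)) x
        = LinearMap.det (((adjE B : En n ≃L[ℝ] En n) : En n →L[ℝ] En n) : En n →ₗ[ℝ] En n)
          * (hessDet f (B x)
            * LinearMap.det ((B : En n →L[ℝ] En n) : En n →ₗ[ℝ] En n)) := by
      unfold hessDet
      rw [hg]
      have : (fun y => adjE B (gradient f (B y))) = ⇑(adjE B) ∘ (gradient f ∘ ⇑B) := rfl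
      rw [this, (adjE B).comp_fderiv, B.comp_right_fderiv]
      rw [ContinuousLinearMap.toLinearMap_comp, ContinuousLinearMap.toLinearMap_comp,
        LinearMap.det_comp, LinearMap.det_comp]
    have hA : LinearMap.det (((adjE B : En n ≃L[ℝ] En n) : En n →L[ℝ] En n) : En n →ₗ[ℝ] En n) ≠ 0 := by
      rw [adjE_coe, det_clm_adjoint]; exact det_equiv_ne_zero B
    have hB' : LinearMap.det ((B : En n →L[ℝ] En n) : En n →ₗ[ℝ] En n) ≠ 0 :=
      det_equiv_ne_zero B
    rw [hc]
    constructor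
    · intro hz
      rcases mul_eq_zero.1 hz with h | h
      · exact absurd h hA
      rcases mul_eq_zero.1 h with h | h
      · exact h
      · exact absurd h hB'
    · intro hz; rw [hz, zero_mul, mul_zero]
    
  constructor
  · rintro ⟨a, b, c⟩
    exact ⟨h1.1 a, h2.1 b, fun hh => c (h3.2 hh)⟩
  · rintro ⟨a, b, c⟩
    exact ⟨h1.2 a, h2.2 b, fun hh => c (h3.1 hh)⟩

lemma inner_adjE_symm (B : En n ≃L[ℝ] En n) (u y : En n) :
    ⟪u, adjE B.symm y⟫ = ⟪B.symm u, y⟫ := by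
  rw [adjE_apply, ContinuousLinearMap.adjoint_inner_right]
  rfl

lemma legendreT_comp (ψ : En n → ℝ) (B : En n ≃L[ℝ] En n) :
    legendreT (fun x => ψ (B x)) = fun y => legendreT ψ (adjE B.symm y) := by
  funext y
  unfold legendreT
  congr 1
  ext r
  constructor
  · rintro ⟨x, rfl⟩
    refine ⟨B x, ?_⟩
    rw [inner_adjE_symm, B.symm_apply_apply]
  · rintro ⟨u, rfl⟩
    refine ⟨B.symm u, ?_⟩
    simp only [inner_adjE_symm, B.apply_symm_apply]

lemma measurePreserving_equiv (B : En n ≃L[ℝ] En n)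
    (hB : |LinearMap.det ((B : En n →L[ℝ] En n) : En n →ₗ[ℝ] En n)| = 1) :
    MeasurePreserving ⇑B (volume : Measure (En n)) volume := by
  refine ⟨B.continuous.measurable, ?_⟩
  have hdet := det_equiv_ne_zero B
  have hmap := Measure.map_linearMap_addHaar_eq_smul_addHaar
    (volume : Measure (En n)) hdet
  have hco : ⇑((B : En n →L[ℝ] En n) : En n →ₗ[ℝ] En n) = ⇑B := rfl
  rw [hco] at hmap
  rw [hmap, abs_inv, hB, inv_one, ENNReal.ofReal_one, one_smul]

lemma setIntegral_preimage (B : En n ≃L[ℝ] En n)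
    (hB : |LinearMap.det ((B : En n →L[ℝ] En n) : En n →ₗ[ℝ] En n)| = 1)
    (s : Set (En n)) (f : En n → ℝ) :
    ∫ x in ⇑B ⁻¹' s, f (B x) = ∫ x in s, f x :=
  (measurePreserving_equiv B hB).setIntegral_preimage_emb
    B.toHomeomorph.measurableEmbedding f s

lemma integrableOn_preimage (B : En n ≃L[ℝ] En n)
    (hB : |LinearMap.det ((B : En n →L[ℝ] En n) : En n →ₗ[ℝ] En n)| = 1)
    (s : Set (En n)) (f : En n → ℝ) :
    IntegrableOn (f ∘ ⇑B) (⇑B ⁻¹' s) ↔ IntegrableOn f s :=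
  ((measurePreserving_equiv B hB).restrict_preimage_emb
    B.toHomeomorph.measurableEmbedding s).integrable_comp_emb
    B.toHomeomorph.measurableEmbedding

lemma logConcave_preimage (B : En n ≃L[ℝ] En n) (s : Set (En n)) (g : En n → ℝ) :
    IsLogConcaveOn (⇑B ⁻¹' s) (g ∘ ⇑B) ↔ IsLogConcaveOn s g := by
  have key : ∀ (x y : En n) (a b : ℝ), B (a • x + b • y) = a • B x + b • B y := by
    intro x y a b; simp [map_add, _root_.map_smul]
  constructor
  · rintro ⟨h0, h1⟩
    constructor
    · intro x hx
      have := h0 (B.symm x) (by simp [Set.mem_preimage, hx])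
      simpa using this
    · intro x hx y hy a b ha hb hab hmem
      have := h1 (B.symm x) (by simp [Set.mem_preimage, hx]) (B.symm y)
        (by simp [Set.mem_preimage, hy]) a b ha hb hab
        (by simp [Set.mem_preimage, key, hmem])
      simpa [key] using this
  · rintro ⟨h0, h1⟩
    constructor
    · intro x hx; exact h0 (B x) hx
    · intro x hx y hy a b ha hb hab hmem
      have := h1 (B x) hx (B y) hy a b ha hb hab (by simpa [key] using hmem)
      simpa [key] using this

lemma adjE_symm_adjoint_apply (T : En n ≃L[ℝ] En n) (v : En n) :
    adjE T.symm (ContinuousLinearMap.adjoint (T : En n →L[ℝ] En n) v) = v := by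
  apply ext_inner_right ℝ
  intro w
  rw [adjE_apply]
  have : ((T.symm : En n ≃L[ℝ] En n) : En n →L[ℝ] En n)
      = (T.symm : En n →L[ℝ] En n) := rfl
  rw [this, ContinuousLinearMap.adjoint_inner_left,
    ContinuousLinearMap.adjoint_inner_left]
  simp

lemma Vh_comp (h F₁ F₂ : ℝ → ℝ) (ψ g : En n → ℝ) (T : En n ≃L[ℝ] En n)
    (hT : |LinearMap.det ((T : En n →L[ℝ] En n) : En n →ₗ[ℝ] En n)| = 1) :
    Vh h F₁ F₂ (fun x => ψ (T x)) (g ∘ ⇑(adjE T.symm)) = Vh h F₁ F₂ ψ g := by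
  unfold Vh
  rw [Xset_comp ψ T]
  have hgrad : ∀ x, gradient (fun y => ψ (T y)) x
      = ContinuousLinearMap.adjoint (T : En n →L[ℝ] En n) (gradient ψ (T x)) :=
    gradient_comp ψ T
  have hint : (fun x => h ((g ∘ ⇑(adjE T.symm)) (gradient (fun y => ψ (T y)) x) /
        F₂ (⟪x, gradient (fun y => ψ (T y)) x⟫ - ψ (T x))) * F₁ (ψ (T x)))
      = fun x => (fun z => h (g (gradient ψ z) / F₂ (⟪z, gradient ψ z⟫ - ψ z)) * F₁ (ψ z)) (T x) := by
    funext x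
    simp only [Function.comp_apply, hgrad, adjE_symm_adjoint_apply,
      ContinuousLinearMap.adjoint_inner_right, ContinuousLinearEquiv.coe_coe]
  rw [hint]
  exact setIntegral_preimage T hT (Xset ψ)
    (fun z => h (g (gradient ψ z) / F₂ (⟪z, gradient ψ z⟫ - ψ z)) * F₁ (ψ z))

lemma Ifun_comp (ψ g : En n → ℝ) (T : En n ≃L[ℝ] En n)
    (hT : |LinearMap.det ((T : En n →L[ℝ] En n) : En n →ₗ[ℝ] En n)| = 1) :
    Ifun (legendreT (fun x => ψ (T x))) (g ∘ ⇑(adjE T.symm)) = Ifun (legendreT ψ) g := by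
  unfold Ifun
  rw [legendreT_comp ψ T, Xset_comp (legendreT ψ) (adjE T.symm)]
  exact setIntegral_preimage (adjE T.symm) (abs_det_adjE_symm T hT) _ _

lemma FplusOn_comp (ψ g : En n → ℝ) (T : En n ≃L[ℝ] En n)
    (hT : |LinearMap.det ((T : En n →L[ℝ] En n) : En n →ₗ[ℝ] En n)| = 1) :
    FplusOn (legendreT (fun x => ψ (T x))) (g ∘ ⇑(adjE T.symm)) ↔ FplusOn (legendreT ψ) g := by
  have hX : Xset (legendreT (fun x => ψ (T x))) = ⇑(adjE T.symm) ⁻¹' Xset (legendreT ψ) := by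
    rw [legendreT_comp ψ T]; exact Xset_comp (legendreT ψ) (adjE T.symm)
  unfold FplusOn
  rw [hX, Ifun_comp ψ g T hT, integrableOn_preimage (adjE T.symm) (abs_det_adjE_symm T hT)]
  constructor
  · rintro ⟨h0, h1, h2⟩
    refine ⟨?_, h1, h2⟩
    intro y hy
    have := h0 ((adjE T.symm).symm y) (by simpa [Set.mem_preimage] using hy)
    simpa using this
  · rintro ⟨h0, h1, h2⟩
    exact ⟨fun y hy => h0 _ hy, h1, h2⟩

lemma logConcave_comp (ψ g : En n → ℝ) (T : En n ≃L[ℝ] En n) :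
    IsLogConcaveOn (Xset (legendreT (fun x => ψ (T x)))) (g ∘ ⇑(adjE T.symm))
      ↔ IsLogConcaveOn (Xset (legendreT ψ)) g := by
  have hX : Xset (legendreT (fun x => ψ (T x))) = ⇑(adjE T.symm) ⁻¹' Xset (legendreT ψ) := by
    rw [legendreT_comp ψ T]; exact Xset_comp (legendreT ψ) (adjE T.symm)
  rw [hX]
  exact logConcave_preimage (adjE T.symm) _ g

lemma comp_symm_comp (T : En n ≃L[ℝ] En n) (g : En n → ℝ) :
    (g ∘ ⇑(adjE T.symm).symm) ∘ ⇑(adjE T.symm) = g := by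
  funext x; simp [Function.comp_apply]

lemma valueSet_eq (h F₁ F₂ : ℝ → ℝ) (ψ : En n → ℝ) (T : En n ≃L[ℝ] En n)
    (hT : |LinearMap.det ((T : En n →L[ℝ] En n) : En n →ₗ[ℝ] En n)| = 1) :
    {r | ∃ g : En n → ℝ, FplusOn (legendreT (fun x => ψ (T x))) g ∧
      Ifun (legendreT (fun x => ψ (T x))) g = sqrtTwoPiPow n ∧
      r = Vh h F₁ F₂ (fun x => ψ (T x)) g}
    = {r | ∃ g : En n → ℝ, FplusOn (legendreT ψ) g ∧
      Ifun (legendreT ψ) g = sqrtTwoPiPow n ∧ r = Vh h F₁ F₂ ψ g} := by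
  ext r
  simp only [Set.mem_setOf_eq]
  constructor
  · rintro ⟨g, hg1, hg2, hg3⟩
    refine ⟨g ∘ ⇑(adjE T.symm).symm, ?_, ?_, ?_⟩
    · exact (FplusOn_comp ψ _ T hT).1 (by rwa [comp_symm_comp])
    · rw [← Ifun_comp ψ _ T hT, comp_symm_comp]; exact hg2
    · rw [← Vh_comp h F₁ F₂ ψ _ T hT, comp_symm_comp]; exact hg3
  · rintro ⟨g, hg1, hg2, hg3⟩
    exact ⟨g ∘ ⇑(adjE T.symm), (FplusOn_comp ψ g T hT).2 hg1,
      by rw [Ifun_comp ψ g T hT]; exact hg2,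
      by rw [Vh_comp h F₁ F₂ ψ g T hT]; exact hg3⟩

lemma valueSetLC_eq (h F₁ F₂ : ℝ → ℝ) (ψ : En n → ℝ) (T : En n ≃L[ℝ] En n)
    (hT : |LinearMap.det ((T : En n →L[ℝ] En n) : En n →ₗ[ℝ] En n)| = 1) :
    {r | ∃ g : En n → ℝ, FplusOn (legendreT (fun x => ψ (T x))) g ∧
      IsLogConcaveOn (Xset (legendreT (fun x => ψ (T x)))) g ∧
      Ifun (legendreT (fun x => ψ (T x))) g = sqrtTwoPiPow n ∧
      r = Vh h F₁ F₂ (fun x => ψ (T x)) g}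
    = {r | ∃ g : En n → ℝ, FplusOn (legendreT ψ) g ∧
      IsLogConcaveOn (Xset (legendreT ψ)) g ∧
      Ifun (legendreT ψ) g = sqrtTwoPiPow n ∧ r = Vh h F₁ F₂ ψ g} := by
  ext r
  simp only [Set.mem_setOf_eq]
  constructor
  · rintro ⟨g, hg1, hgl, hg2, hg3⟩
    refine ⟨g ∘ ⇑(adjE T.symm).symm, ?_, ?_, ?_, ?_⟩
    · exact (FplusOn_comp ψ _ T hT).1 (by rwa [comp_symm_comp])
    · exact (logConcave_comp ψ _ T).1 (by rwa [comp_symm_comp])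
    · rw [← Ifun_comp ψ _ T hT, comp_symm_comp]; exact hg2
    · rw [← Vh_comp h F₁ F₂ ψ _ T hT, comp_symm_comp]; exact hg3
  · rintro ⟨g, hg1, hgl, hg2, hg3⟩
    exact ⟨g ∘ ⇑(adjE T.symm), (FplusOn_comp ψ g T hT).2 hg1,
      (logConcave_comp ψ g T).2 hgl,
      by rw [Ifun_comp ψ g T hT]; exact hg2,
      by rw [Vh_comp h F₁ F₂ ψ g T hT]; exact hg3⟩

/-- `SL±(n)`-invariance of the general Orlicz affine and geominimal
surface areas. -/
theorem statement3 (n : ℕ) (ψ : En n → ℝ) (F₁ F₂ h : ℝ → ℝ)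
    (hψ : ConvexOn ℝ Set.univ ψ)
    (hF₁m : Measurable F₁) (hF₂m : Measurable F₂)
    (hF₁pos : ∀ t, 0 < F₁ t) (hF₂pos : ∀ t, 0 < F₂ t)
    (hclass : PhiClass h ∨ PsiClass h)
    (T : En n ≃L[ℝ] En n)
    (hT : |LinearMap.det ((T : En n →L[ℝ] En n).toLinearMap)| = 1) :
    (PhiClass h →
      asOrliczInf h F₁ F₂ (fun x => ψ (T x)) = asOrliczInf h F₁ F₂ ψ ∧
      GOrliczInf h F₁ F₂ (fun x => ψ (T x)) = GOrliczInf h F₁ F₂ ψ) ∧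
    (PsiClass h →
      asOrliczSup h F₁ F₂ (fun x => ψ (T x)) = asOrliczSup h F₁ F₂ ψ ∧
      GOrliczSup h F₁ F₂ (fun x => ψ (T x)) = GOrliczSup h F₁ F₂ ψ) := by
  refine ⟨fun _ => ⟨?_, ?_⟩, fun _ => ⟨?_, ?_⟩⟩
  · exact congrArg sInf (valueSet_eq h F₁ F₂ ψ T hT)
  · exact congrArg sInf (valueSetLC_eq h F₁ F₂ ψ T hT)
  · exact congrArg sSup (valueSet_eq h F₁ F₂ ψ T hT)
  · exact congrArg sSup (valueSetLC_eq h F₁ F₂ ψ T hT)
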